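/- Let q_s, q_t > 0 and let A be the real algebra with basis {T_w : w ∈ W} indexed by the infinite dihedral group W = ⟨s,t | s²=t²=1⟩, with multiplication determined by T_s T_w = T_{sw} if ℓ(sw) > ℓ(w) and T_s T_w = (q_s−1)T_w + q_s T_{sw} if ℓ(sw) < ℓ(w) (and similarly for t). Then the map φ determined by φ(s) = (1−q_s)/(1+q_s) + (2/(1+q_s))T_s and φ(t) = (1−q_t)/(1+q_t) + (2/(1+q_t))T_t extends to an algebra isomorphism from the group algebra ℝW to A. -/

import Mathlib

/-! `DihedralGroup 0` is the infinite dihedral group W = ⟨s,t | s²=t²=1⟩ with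
generators s = sr 0 and t = sr 1. -/

def zmodToInt (n : ZMod 0) : ℤ := n

/-- Word length with respect to the Coxeter generators s = sr 0, t = sr 1 of
the infinite dihedral group. -/
def dihLen : DihedralGroup 0 → ℕ
  | .r n => 2 * (zmodToInt n).natAbs
  | .sr k => if zmodToInt k ≤ 0 then 2 * (zmodToInt k).natAbs + 1
             else 2 * (zmodToInt k).natAbs - 1

namespace HeckeAux

abbrev W := DihedralGroup 0

def R (n : ℤ) : W := .r n
def SR (n : ℤ) : W := .sr n

lemma len_R (n : ℤ) : dihLen (R n) = 2 * n.natAbs := rfl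
lemma len_SR (n : ℤ) :
    dihLen (SR n) = if n ≤ 0 then 2 * n.natAbs + 1 else 2 * n.natAbs - 1 := rfl

lemma one_eq : (1 : W) = R 0 := rfl

lemma descent_R (m : ℤ) (hm : m ≠ 0) :
    ∃ g w', (g = SR 0 ∨ g = SR 1) ∧ R m = g * w' ∧ dihLen w' < dihLen (R m) := by
  rcases lt_or_gt_of_ne hm with h | h
  · refine ⟨SR 1, SR (m + 1), Or.inr rfl, ?_, ?_⟩
    · show R m = R (m + 1 - 1); norm_num
    · rw [len_SR, len_R, if_pos (by omega)]; omega
  · refine ⟨SR 0, SR m, Or.inl rfl, ?_, ?_⟩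
    · show R m = R (m - 0); norm_num
    · rw [len_SR, len_R, if_neg (by omega)]; omega

lemma descent_SR (m : ℤ) :
    ∃ g w', (g = SR 0 ∨ g = SR 1) ∧ SR m = g * w' ∧ dihLen w' < dihLen (SR m) := by
  rcases le_or_gt m 0 with h | h
  · refine ⟨SR 0, R m, Or.inl rfl, ?_, ?_⟩
    · show SR m = SR (0 + m); norm_num
    · rw [len_SR, len_R, if_pos h]; omega
  · refine ⟨SR 1, R (m - 1), Or.inr rfl, ?_, ?_⟩
    · show SR m = SR (1 + (m - 1)); norm_num
    · rw [len_SR, len_R, if_neg (by omega)]; omega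

lemma descent (w : W) (hw : w ≠ 1) :
    ∃ g w', (g = SR 0 ∨ g = SR 1) ∧ w = g * w' ∧ dihLen w' < dihLen w := by
  cases w with
  | r n =>
    refine descent_R (zmodToInt n) fun h => hw ?_
    show R (zmodToInt n) = 1
    rw [h]; rfl
  | sr n => exact descent_SR (zmodToInt n)

section DihedralHom

variable {G : Type*} [Group G] (a b : G)

def toGrp : W → G
  | .r n => (a * b) ^ (zmodToInt n)
  | .sr n => a * (a * b) ^ (zmodToInt n)

lemma toGrp_R (n : ℤ) : toGrp a b (R n) = (a * b) ^ n := rfl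
lemma toGrp_SR (n : ℤ) : toGrp a b (SR n) = a * (a * b) ^ n := rfl

variable (ha : a * a = 1) (hb : b * b = 1)

include ha hb in
lemma semiconj (j : ℤ) : a * (a * b) ^ j = (a * b) ^ (-j) * a := by
  have hai : a⁻¹ = a := inv_eq_of_mul_eq_one_left ha
  have hbi : b⁻¹ = b := inv_eq_of_mul_eq_one_left hb
  have h : SemiconjBy a (a * b) (a * b)⁻¹ := by
    unfold SemiconjBy
    rw [mul_inv_rev, hai, hbi, ← mul_assoc, ha, one_mul, mul_assoc, ha, mul_one]
  have h2 := h.zpow_right j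
  unfold SemiconjBy at h2
  rw [h2, inv_zpow, ← zpow_neg]

include ha hb in
lemma toGrp_mul (x y : W) : toGrp a b (x * y) = toGrp a b x * toGrp a b y := by
  cases x with
  | r i =>
    cases y with
    | r j =>
      show (a * b) ^ (zmodToInt i + zmodToInt j)
          = (a * b) ^ (zmodToInt i) * (a * b) ^ (zmodToInt j)
      rw [zpow_add]
    | sr j =>
      show a * (a * b) ^ (zmodToInt j - zmodToInt i)
          = (a * b) ^ (zmodToInt i) * (a * (a * b) ^ (zmodToInt j))
      rw [semiconj a b ha hb (zmodToInt j), ← mul_assoc, ← zpow_add,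
        semiconj a b ha hb (zmodToInt j - zmodToInt i),
        show -(zmodToInt j - zmodToInt i) = zmodToInt i + -zmodToInt j by ring]
  | sr i =>
    cases y with
    | r j =>
      show a * (a * b) ^ (zmodToInt i + zmodToInt j)
          = a * (a * b) ^ (zmodToInt i) * (a * b) ^ (zmodToInt j)
      rw [mul_assoc, zpow_add]
    | sr j =>
      show (a * b) ^ (zmodToInt j - zmodToInt i)
          = a * (a * b) ^ (zmodToInt i) * (a * (a * b) ^ (zmodToInt j))
      rw [mul_assoc, semiconj a b ha hb (zmodToInt j),
        ← mul_assoc ((a*b) ^ (zmodToInt i)), ← zpow_add, ← mul_assoc,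
        semiconj a b ha hb (zmodToInt i + -zmodToInt j), mul_assoc, ha, mul_one,
        show -(zmodToInt i + -zmodToInt j) = zmodToInt j - zmodToInt i by ring]

end DihedralHom

end HeckeAux

namespace HeckeAux

section Scalars

variable {M : Type*} [Ring M] [Algebra ℝ M]

/-- σ-generator: the image of a Coxeter generator. -/
noncomputable def sig (q : ℝ) (x : M) : M := algebraMap ℝ M ((1 - q) / (1 + q)) + (2 / (1 + q)) • x

/-- t-generator: preimage of a Hecke generator in the group algebra. -/
noncomputable def tgen (q : ℝ) (x : M) : M := ((1 + q) / 2) • x + ((q - 1) / 2) • 1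

lemma sig_sq {q : ℝ} (hq : 0 < q) (x : M) (hx : x * x = (q - 1) • x + q • 1) :
    sig q x * sig q x = 1 := by
  have hq1 : (1 : ℝ) + q ≠ 0 := by positivity
  unfold sig
  rw [Algebra.algebraMap_eq_smul_one, mul_add, add_mul, add_mul, smul_mul_smul_comm,
    smul_mul_smul_comm, smul_mul_smul_comm, smul_mul_smul_comm]
  simp only [one_mul, mul_one]
  rw [hx]
  match_scalars <;> (field_simp; try ring)

lemma tgen_sq {q : ℝ} (x : M) (hx : x * x = 1) :
    tgen q x * tgen q x = (q - 1) • tgen q x + q • 1 := by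
  unfold tgen
  rw [mul_add, add_mul, add_mul, smul_mul_smul_comm, smul_mul_smul_comm, smul_mul_smul_comm,
    smul_mul_smul_comm]
  simp only [one_mul, mul_one]
  rw [hx]
  match_scalars <;> ring

lemma tgen_sig {q : ℝ} (hq : 0 < q) (y : M) :
    ((1 + q) / 2) • sig q y + ((q - 1) / 2) • (1 : M) = y := by
  have hq1 : (1 : ℝ) + q ≠ 0 := by positivity
  unfold sig
  rw [Algebra.algebraMap_eq_smul_one]
  match_scalars <;> (field_simp; try ring)

lemma eq_tgen {q : ℝ} (hq : 0 < q) (x : M) :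
    x = (2 / (1 + q)) • tgen q x + ((1 - q) / (1 + q)) • 1 := by
  have hq1 : (1 : ℝ) + q ≠ 0 := by positivity
  unfold tgen
  match_scalars <;> (field_simp; try ring)

end Scalars

end HeckeAux

namespace HeckeAux

open MonoidAlgebra

noncomputable def tS (qs : ℝ) : MonoidAlgebra ℝ W := tgen qs (of ℝ W (SR 0))
noncomputable def tT (qt : ℝ) : MonoidAlgebra ℝ W := tgen qt (of ℝ W (SR 1))

noncomputable def E (qs qt : ℝ) : W → MonoidAlgebra ℝ W
  | .r n => if 0 ≤ zmodToInt n then (tS qs * tT qt) ^ (zmodToInt n).toNat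
            else (tT qt * tS qs) ^ (-(zmodToInt n)).toNat
  | .sr n => if zmodToInt n ≤ 0 then tS qs * (tT qt * tS qs) ^ (-(zmodToInt n)).toNat
             else tT qt * (tS qs * tT qt) ^ ((zmodToInt n) - 1).toNat

variable (qs qt : ℝ)

lemma E_R (n : ℤ) : E qs qt (R n) =
    if 0 ≤ n then (tS qs * tT qt) ^ n.toNat else (tT qt * tS qs) ^ (-n).toNat := rfl

lemma E_SR (n : ℤ) : E qs qt (SR n) =
    if n ≤ 0 then tS qs * (tT qt * tS qs) ^ (-n).toNat
    else tT qt * (tS qs * tT qt) ^ (n - 1).toNat := rfl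

lemma E_R_nonpos {n : ℤ} (hn : n ≤ 0) : E qs qt (R n) = (tT qt * tS qs) ^ (-n).toNat := by
  rcases eq_or_lt_of_le hn with h | h
  · subst h; rw [E_R, if_pos le_rfl]; norm_num
  · rw [E_R, if_neg (by omega)]

lemma E_R_nonneg {n : ℤ} (hn : 0 ≤ n) : E qs qt (R n) = (tS qs * tT qt) ^ n.toNat := by
  rw [E_R, if_pos hn]

lemma of_SR0_sq : of ℝ W (SR 0) * of ℝ W (SR 0) = 1 := by
  rw [← map_mul, show SR 0 * SR 0 = (1 : W) by show R (0 - 0) = R 0; norm_num, map_one]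

lemma of_SR1_sq : of ℝ W (SR 1) * of ℝ W (SR 1) = 1 := by
  rw [← map_mul, show SR 1 * SR 1 = (1 : W) by show R (1 - 1) = R 0; norm_num, map_one]

lemma tS_sq : tS qs * tS qs = (qs - 1) • tS qs + qs • 1 := tgen_sq _ of_SR0_sq
lemma tT_sq : tT qt * tT qt = (qt - 1) • tT qt + qt • 1 := tgen_sq _ of_SR1_sq

lemma pow_split {M : Type*} [Monoid M] (u v : M) (m : ℤ) (hm : 0 < m) :
    (u * v) ^ m.toNat = u * (v * (u * v) ^ (m - 1).toNat) := by
  rw [show m.toNat = (m - 1).toNat + 1 by omega, pow_succ', mul_assoc]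

/-- The span of the `E w`. -/
noncomputable def P : Submodule ℝ (MonoidAlgebra ℝ W) :=
  Submodule.span ℝ (Set.range (E qs qt))

lemma memP_E (w : W) : E qs qt w ∈ P qs qt := Submodule.subset_span ⟨w, rfl⟩

lemma one_memP : (1 : MonoidAlgebra ℝ W) ∈ P qs qt := by
  have : E qs qt (R 0) = 1 := by rw [E_R, if_pos le_rfl]; norm_num
  exact this ▸ memP_E qs qt (R 0)

lemma tS_mul_E_mem (w : W) : tS qs * E qs qt w ∈ P qs qt := by
  cases w with
  | r n =>
    show tS qs * E qs qt (R (zmodToInt n)) ∈ P qs qt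
    set m := zmodToInt n with hm
    rcases le_or_gt m 0 with hn | hn
    · have : tS qs * E qs qt (R m) = E qs qt (SR m) := by
        rw [E_R_nonpos qs qt hn, E_SR, if_pos hn]
      exact this ▸ memP_E qs qt (SR m)
    · have e1 : E qs qt (R m) = tS qs * (tT qt * (tS qs * tT qt) ^ (m - 1).toNat) := by
        rw [E_R_nonneg qs qt hn.le, pow_split _ _ _ hn]
      have e2 : tT qt * (tS qs * tT qt) ^ (m - 1).toNat = E qs qt (SR m) := by
        rw [E_SR, if_neg (by omega)]
      have : tS qs * E qs qt (R m) =
          (qs - 1) • E qs qt (R m) + qs • E qs qt (SR m) := by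
        calc tS qs * E qs qt (R m)
            = (tS qs * tS qs) * (tT qt * (tS qs * tT qt) ^ (m - 1).toNat) := by
              rw [e1, ← mul_assoc]
          _ = ((qs - 1) • tS qs + qs • 1) * (tT qt * (tS qs * tT qt) ^ (m - 1).toNat) := by
              rw [tS_sq]
          _ = (qs - 1) • (tS qs * (tT qt * (tS qs * tT qt) ^ (m - 1).toNat))
              + qs • (tT qt * (tS qs * tT qt) ^ (m - 1).toNat) := by
              rw [add_mul, smul_mul_assoc, smul_mul_assoc, one_mul]
          _ = (qs - 1) • E qs qt (R m) + qs • E qs qt (SR m) := by rw [← e1, e2]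
      rw [this]
      exact Submodule.add_mem _ (Submodule.smul_mem _ _ (memP_E qs qt (R m)))
        (Submodule.smul_mem _ _ (memP_E qs qt (SR m)))
  | sr n =>
    show tS qs * E qs qt (SR (zmodToInt n)) ∈ P qs qt
    set m := zmodToInt n with hm
    rcases le_or_gt m 0 with hn | hn
    · have e1 : E qs qt (SR m) = tS qs * (tT qt * tS qs) ^ (-m).toNat := by
        rw [E_SR, if_pos hn]
      have e2 : (tT qt * tS qs) ^ (-m).toNat = E qs qt (R m) := (E_R_nonpos qs qt hn).symm
      have : tS qs * E qs qt (SR m) =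
          (qs - 1) • E qs qt (SR m) + qs • E qs qt (R m) := by
        calc tS qs * E qs qt (SR m)
            = (tS qs * tS qs) * (tT qt * tS qs) ^ (-m).toNat := by rw [e1, ← mul_assoc]
          _ = ((qs - 1) • tS qs + qs • 1) * (tT qt * tS qs) ^ (-m).toNat := by rw [tS_sq]
          _ = (qs - 1) • (tS qs * (tT qt * tS qs) ^ (-m).toNat)
              + qs • (tT qt * tS qs) ^ (-m).toNat := by
              rw [add_mul, smul_mul_assoc, smul_mul_assoc, one_mul]
          _ = (qs - 1) • E qs qt (SR m) + qs • E qs qt (R m) := by rw [← e1, e2]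
      rw [this]
      exact Submodule.add_mem _ (Submodule.smul_mem _ _ (memP_E qs qt (SR m)))
        (Submodule.smul_mem _ _ (memP_E qs qt (R m)))
    · have : tS qs * E qs qt (SR m) = E qs qt (R m) := by
        rw [E_SR, if_neg (by omega), E_R_nonneg qs qt hn.le, pow_split _ _ _ hn]
      exact this ▸ memP_E qs qt (R m)

lemma tT_mul_E_mem (w : W) : tT qt * E qs qt w ∈ P qs qt := by
  cases w with
  | r n =>
    show tT qt * E qs qt (R (zmodToInt n)) ∈ P qs qt
    set m := zmodToInt n with hm
    rcases le_or_gt 0 m with hn | hn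
    · have : tT qt * E qs qt (R m) = E qs qt (SR (m + 1)) := by
        rw [E_R_nonneg qs qt hn, E_SR, if_neg (by omega), show m + 1 - 1 = m by ring]
      exact this ▸ memP_E qs qt (SR (m + 1))
    · have e1 : E qs qt (R m) = tT qt * (tS qs * (tT qt * tS qs) ^ (-m - 1).toNat) := by
        rw [E_R_nonpos qs qt hn.le, pow_split _ _ _ (by omega)]
      have e2 : tS qs * (tT qt * tS qs) ^ (-m - 1).toNat = E qs qt (SR (m + 1)) := by
        rw [E_SR, if_pos (by omega), show -(m + 1) = -m - 1 by ring]
      have : tT qt * E qs qt (R m) =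
          (qt - 1) • E qs qt (R m) + qt • E qs qt (SR (m + 1)) := by
        calc tT qt * E qs qt (R m)
            = (tT qt * tT qt) * (tS qs * (tT qt * tS qs) ^ (-m - 1).toNat) := by
              rw [e1, ← mul_assoc]
          _ = ((qt - 1) • tT qt + qt • 1) * (tS qs * (tT qt * tS qs) ^ (-m - 1).toNat) := by
              rw [tT_sq]
          _ = (qt - 1) • (tT qt * (tS qs * (tT qt * tS qs) ^ (-m - 1).toNat))
              + qt • (tS qs * (tT qt * tS qs) ^ (-m - 1).toNat) := by
              rw [add_mul, smul_mul_assoc, smul_mul_assoc, one_mul]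
          _ = (qt - 1) • E qs qt (R m) + qt • E qs qt (SR (m + 1)) := by rw [← e1, e2]
      rw [this]
      exact Submodule.add_mem _ (Submodule.smul_mem _ _ (memP_E qs qt (R m)))
        (Submodule.smul_mem _ _ (memP_E qs qt (SR (m + 1))))
  | sr n =>
    show tT qt * E qs qt (SR (zmodToInt n)) ∈ P qs qt
    set m := zmodToInt n with hm
    rcases le_or_gt m 0 with hn | hn
    · have : tT qt * E qs qt (SR m) = E qs qt (R (m - 1)) := by
        rw [E_SR, if_pos hn, E_R_nonpos qs qt (show m - 1 ≤ 0 by omega),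
          pow_split (tT qt) (tS qs) (-(m - 1)) (by omega),
          show (-(m - 1) - 1 : ℤ) = -m by ring]
      exact this ▸ memP_E qs qt (R (m - 1))
    · have e1 : E qs qt (SR m) = tT qt * (tS qs * tT qt) ^ (m - 1).toNat := by
        rw [E_SR, if_neg (by omega)]
      have e2 : (tS qs * tT qt) ^ (m - 1).toNat = E qs qt (R (m - 1)) :=
        (E_R_nonneg qs qt (by omega)).symm
      have : tT qt * E qs qt (SR m) =
          (qt - 1) • E qs qt (SR m) + qt • E qs qt (R (m - 1)) := by
        calc tT qt * E qs qt (SR m)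
            = (tT qt * tT qt) * (tS qs * tT qt) ^ (m - 1).toNat := by rw [e1, ← mul_assoc]
          _ = ((qt - 1) • tT qt + qt • 1) * (tS qs * tT qt) ^ (m - 1).toNat := by rw [tT_sq]
          _ = (qt - 1) • (tT qt * (tS qs * tT qt) ^ (m - 1).toNat)
              + qt • (tS qs * tT qt) ^ (m - 1).toNat := by
              rw [add_mul, smul_mul_assoc, smul_mul_assoc, one_mul]
          _ = (qt - 1) • E qs qt (SR m) + qt • E qs qt (R (m - 1)) := by rw [← e1, e2]
      rw [this]
      exact Submodule.add_mem _ (Submodule.smul_mem _ _ (memP_E qs qt (SR m)))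
        (Submodule.smul_mem _ _ (memP_E qs qt (R (m - 1))))

lemma mulP_tS : ∀ x ∈ P qs qt, tS qs * x ∈ P qs qt := by
  have h : P qs qt ≤ (P qs qt).comap (LinearMap.mulLeft ℝ (tS qs)) := by
    rw [P, Submodule.span_le]
    rintro _ ⟨w, rfl⟩
    exact tS_mul_E_mem qs qt w
  intro x hx
  exact h hx

lemma mulP_tT : ∀ x ∈ P qs qt, tT qt * x ∈ P qs qt := by
  have h : P qs qt ≤ (P qs qt).comap (LinearMap.mulLeft ℝ (tT qt)) := by
    rw [P, Submodule.span_le]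
    rintro _ ⟨w, rfl⟩
    exact tT_mul_E_mem qs qt w
  intro x hx
  exact h hx

lemma mulP_of0 (hqs : 0 < qs) : ∀ x ∈ P qs qt, of ℝ W (SR 0) * x ∈ P qs qt := by
  intro x hx
  rw [eq_tgen hqs (of ℝ W (SR 0)), add_mul, smul_mul_assoc, smul_mul_assoc, one_mul]
  exact Submodule.add_mem _ (Submodule.smul_mem _ _ (mulP_tS qs qt x hx))
    (Submodule.smul_mem _ _ hx)

lemma mulP_of1 (hqt : 0 < qt) : ∀ x ∈ P qs qt, of ℝ W (SR 1) * x ∈ P qs qt := by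
  intro x hx
  rw [eq_tgen hqt (of ℝ W (SR 1)), add_mul, smul_mul_assoc, smul_mul_assoc, one_mul]
  exact Submodule.add_mem _ (Submodule.smul_mem _ _ (mulP_tT qs qt x hx))
    (Submodule.smul_mem _ _ hx)

lemma of_memP (hqs : 0 < qs) (hqt : 0 < qt) (w : W) : of ℝ W w ∈ P qs qt := by
  have key : ∀ N : ℕ, ∀ w : W, dihLen w ≤ N → of ℝ W w ∈ P qs qt := by
    intro N
    induction N using Nat.strong_induction_on with
    | _ N ih =>
      intro w hw
      by_cases h1 : w = 1
      · rw [h1, map_one]; exact one_memP qs qt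
      · obtain ⟨g, w', hg, hweq, hlen⟩ := descent w h1
        subst hweq
        rw [map_mul]
        have hw' : of ℝ W w' ∈ P qs qt :=
          ih (dihLen w') (by omega) w' le_rfl
        rcases hg with rfl | rfl
        · exact mulP_of0 qs qt hqs _ hw'
        · exact mulP_of1 qs qt hqt _ hw'
  exact key (dihLen w) w le_rfl

end HeckeAux

namespace HeckeAux

open MonoidAlgebra

section ASide

variable {A : Type*} [Ring A] [Algebra ℝ A] (T : Module.Basis W ℝ A) (qs qt : ℝ)

lemma Ts_sq (hone : T 1 = 1)
    (hmuls : ∀ w : DihedralGroup 0,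
      T (DihedralGroup.sr 0) * T w =
        if dihLen (DihedralGroup.sr 0 * w) > dihLen w then T (DihedralGroup.sr 0 * w)
        else (qs - 1) • T w + qs • T (DihedralGroup.sr 0 * w)) :
    T (SR 0) * T (SR 0) = (qs - 1) • T (SR 0) + qs • 1 := by
  have h := hmuls (SR 0)
  have hc : ¬ dihLen (SR 0) < dihLen (R 0) := by rw [len_R, len_SR, if_pos le_rfl]; omega
  rw [show DihedralGroup.sr 0 * SR 0 = R 0 by show R (0 - 0) = R 0; rw [sub_zero],
    if_neg hc, show (R 0 : W) = 1 from rfl, hone] at h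
  exact h

lemma Tt_sq (hone : T 1 = 1)
    (hmult : ∀ w : DihedralGroup 0,
      T (DihedralGroup.sr 1) * T w =
        if dihLen (DihedralGroup.sr 1 * w) > dihLen w then T (DihedralGroup.sr 1 * w)
        else (qt - 1) • T w + qt • T (DihedralGroup.sr 1 * w)) :
    T (SR 1) * T (SR 1) = (qt - 1) • T (SR 1) + qt • 1 := by
  have h := hmult (SR 1)
  have hc : ¬ dihLen (SR 1) < dihLen (R 0) := by
    rw [len_R, len_SR, if_neg (by omega)]; omega
  rw [show DihedralGroup.sr 1 * SR 1 = R 0 by show R (1 - 1) = R 0; norm_num,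
    if_neg hc, show (R 0 : W) = 1 from rfl, hone] at h
  exact h

lemma Ts_mul_R
    (hmuls : ∀ w : DihedralGroup 0,
      T (DihedralGroup.sr 0) * T w =
        if dihLen (DihedralGroup.sr 0 * w) > dihLen w then T (DihedralGroup.sr 0 * w)
        else (qs - 1) • T w + qs • T (DihedralGroup.sr 0 * w))
    (n : ℤ) (hn : n ≤ 0) : T (SR 0) * T (R n) = T (SR n) := by
  have h := hmuls (R n)
  have hc : dihLen (R n) < dihLen (SR n) := by rw [len_R, len_SR, if_pos hn]; omega
  rw [show DihedralGroup.sr 0 * R n = SR n by show SR (0 + n) = SR n; rw [zero_add],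
    if_pos hc] at h
  exact h

lemma Ts_mul_SR
    (hmuls : ∀ w : DihedralGroup 0,
      T (DihedralGroup.sr 0) * T w =
        if dihLen (DihedralGroup.sr 0 * w) > dihLen w then T (DihedralGroup.sr 0 * w)
        else (qs - 1) • T w + qs • T (DihedralGroup.sr 0 * w))
    (n : ℤ) (hn : 0 < n) : T (SR 0) * T (SR n) = T (R n) := by
  have h := hmuls (SR n)
  have hc : dihLen (SR n) < dihLen (R n) := by
    rw [len_R, len_SR, if_neg (by omega)]; omega
  rw [show DihedralGroup.sr 0 * SR n = R n by show R (n - 0) = R n; rw [sub_zero],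
    if_pos hc] at h
  exact h

lemma Tt_mul_R
    (hmult : ∀ w : DihedralGroup 0,
      T (DihedralGroup.sr 1) * T w =
        if dihLen (DihedralGroup.sr 1 * w) > dihLen w then T (DihedralGroup.sr 1 * w)
        else (qt - 1) • T w + qt • T (DihedralGroup.sr 1 * w))
    (n : ℤ) (hn : 0 ≤ n) : T (SR 1) * T (R n) = T (SR (n + 1)) := by
  have h := hmult (R n)
  have hc : dihLen (R n) < dihLen (SR (n + 1)) := by
    rw [len_R, len_SR, if_neg (by omega)]; omega
  rw [show DihedralGroup.sr 1 * R n = SR (n + 1) by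
      show SR (1 + n) = SR (n + 1); rw [add_comm], if_pos hc] at h
  exact h

lemma Tt_mul_SR
    (hmult : ∀ w : DihedralGroup 0,
      T (DihedralGroup.sr 1) * T w =
        if dihLen (DihedralGroup.sr 1 * w) > dihLen w then T (DihedralGroup.sr 1 * w)
        else (qt - 1) • T w + qt • T (DihedralGroup.sr 1 * w))
    (n : ℤ) (hn : n ≤ 0) : T (SR 1) * T (SR n) = T (R (n - 1)) := by
  have h := hmult (SR n)
  have hc : dihLen (SR n) < dihLen (R (n - 1)) := by
    rw [len_R, len_SR, if_pos hn]; omega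
  rw [show DihedralGroup.sr 1 * SR n = R (n - 1) from rfl, if_pos hc] at h
  exact h

lemma powST (hone : T 1 = 1)
    (hmuls : ∀ w : DihedralGroup 0,
      T (DihedralGroup.sr 0) * T w =
        if dihLen (DihedralGroup.sr 0 * w) > dihLen w then T (DihedralGroup.sr 0 * w)
        else (qs - 1) • T w + qs • T (DihedralGroup.sr 0 * w))
    (hmult : ∀ w : DihedralGroup 0,
      T (DihedralGroup.sr 1) * T w =
        if dihLen (DihedralGroup.sr 1 * w) > dihLen w then T (DihedralGroup.sr 1 * w)
        else (qt - 1) • T w + qt • T (DihedralGroup.sr 1 * w)) :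
    ∀ n : ℕ, (T (SR 0) * T (SR 1)) ^ n = T (R (n : ℤ)) := by
  intro n
  induction n with
  | zero => simp only [Nat.cast_zero, pow_zero, show (R (0 : ℤ) : W) = 1 from rfl, hone]
  | succ n ih =>
    rw [pow_succ', ih, mul_assoc, Tt_mul_R T qt hmult (n : ℤ) (by positivity),
      Ts_mul_SR T qs hmuls ((n : ℤ) + 1) (by positivity),
      show ((n : ℤ) + 1) = ((n + 1 : ℕ) : ℤ) by push_cast; ring]

lemma powTS (hone : T 1 = 1)
    (hmuls : ∀ w : DihedralGroup 0,
      T (DihedralGroup.sr 0) * T w =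
        if dihLen (DihedralGroup.sr 0 * w) > dihLen w then T (DihedralGroup.sr 0 * w)
        else (qs - 1) • T w + qs • T (DihedralGroup.sr 0 * w))
    (hmult : ∀ w : DihedralGroup 0,
      T (DihedralGroup.sr 1) * T w =
        if dihLen (DihedralGroup.sr 1 * w) > dihLen w then T (DihedralGroup.sr 1 * w)
        else (qt - 1) • T w + qt • T (DihedralGroup.sr 1 * w)) :
    ∀ n : ℕ, (T (SR 1) * T (SR 0)) ^ n = T (R (-(n : ℤ))) := by
  intro n
  induction n with
  | zero => simp only [Nat.cast_zero, neg_zero, pow_zero, show (R (0 : ℤ) : W) = 1 from rfl, hone]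
  | succ n ih =>
    rw [pow_succ', ih, mul_assoc, Ts_mul_R T qs hmuls (-(n : ℤ)) (by omega),
      Tt_mul_SR T qt hmult (-(n : ℤ)) (by omega),
      show (-(n : ℤ) - 1) = -((n + 1 : ℕ) : ℤ) by push_cast; ring]

end ASide

section Phi

variable {A : Type*} [Ring A] [Algebra ℝ A]

def mkUnit (x : A) (hx : x * x = 1) : Aˣ := ⟨x, x, hx, hx⟩

lemma mkUnit_mul_self (x : A) (hx : x * x = 1) : mkUnit x hx * mkUnit x hx = 1 :=
  Units.ext hx

/-- The algebra morphism `ℝ[W] → A` induced by a pair of involutions. -/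
noncomputable def phi0 (x y : A) (hx : x * x = 1) (hy : y * y = 1) :
    MonoidAlgebra ℝ W →ₐ[ℝ] A :=
  MonoidAlgebra.lift ℝ A W ((Units.coeHom A).comp
    (MonoidHom.mk' (toGrp (mkUnit x hx) (mkUnit y hy))
      (toGrp_mul _ _ (mkUnit_mul_self x hx) (mkUnit_mul_self y hy))))

lemma phi0_of (x y : A) (hx : x * x = 1) (hy : y * y = 1) (w : W) :
    phi0 x y hx hy (of ℝ W w) = ((toGrp (mkUnit x hx) (mkUnit y hy) w : Aˣ) : A) := by
  rw [phi0, MonoidAlgebra.lift_of]; rfl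

lemma phi0_of_SR0 (x y : A) (hx : x * x = 1) (hy : y * y = 1) :
    phi0 x y hx hy (of ℝ W (SR 0)) = x := by
  rw [phi0_of, toGrp_SR, zpow_zero, mul_one]; rfl

lemma phi0_of_SR1 (x y : A) (hx : x * x = 1) (hy : y * y = 1) :
    phi0 x y hx hy (of ℝ W (SR 1)) = y := by
  rw [phi0_of, toGrp_SR, zpow_one, ← mul_assoc, mkUnit_mul_self, one_mul]; rfl

lemma phi0_tS (x y : A) (hx : x * x = 1) (hy : y * y = 1) (q : ℝ) :
    phi0 x y hx hy (tgen q (of ℝ W (SR 0))) = ((1 + q) / 2) • x + ((q - 1) / 2) • 1 := by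
  rw [tgen, map_add, map_smul, map_smul, map_one, phi0_of_SR0]

lemma phi0_tT (x y : A) (hx : x * x = 1) (hy : y * y = 1) (q : ℝ) :
    phi0 x y hx hy (tgen q (of ℝ W (SR 1))) = ((1 + q) / 2) • y + ((q - 1) / 2) • 1 := by
  rw [tgen, map_add, map_smul, map_smul, map_one, phi0_of_SR1]

end Phi

end HeckeAux


open HeckeAux MonoidAlgebra

/-- Let A be a real algebra with basis {T_w : w ∈ W} (W the infinite dihedral
group), unit T_1 = 1, and Hecke multiplication rules
T_s T_w = T_{sw} if ℓ(sw) > ℓ(w) and T_s T_w = (q_s−1)T_w + q_s T_{sw}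
otherwise (similarly for t), where q_s, q_t > 0.  Then
φ(s) = (1−q_s)/(1+q_s) + (2/(1+q_s))T_s, φ(t) = (1−q_t)/(1+q_t) + (2/(1+q_t))T_t
extends to an algebra isomorphism ℝW ≃ A. -/
theorem hecke_iso_group_algebra (qs qt : ℝ) (hqs : 0 < qs) (hqt : 0 < qt)
    {A : Type*} [Ring A] [Algebra ℝ A]
    (T : Module.Basis (DihedralGroup 0) ℝ A)
    (hone : T 1 = 1)
    (hmuls : ∀ w : DihedralGroup 0,
      T (DihedralGroup.sr 0) * T w =
        if dihLen (DihedralGroup.sr 0 * w) > dihLen w then T (DihedralGroup.sr 0 * w)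
        else (qs - 1) • T w + qs • T (DihedralGroup.sr 0 * w))
    (hmult : ∀ w : DihedralGroup 0,
      T (DihedralGroup.sr 1) * T w =
        if dihLen (DihedralGroup.sr 1 * w) > dihLen w then T (DihedralGroup.sr 1 * w)
        else (qt - 1) • T w + qt • T (DihedralGroup.sr 1 * w)) :
    ∃ φ : MonoidAlgebra ℝ (DihedralGroup 0) ≃ₐ[ℝ] A,
      φ (MonoidAlgebra.of ℝ (DihedralGroup 0) (DihedralGroup.sr 0)) =
        algebraMap ℝ A ((1 - qs) / (1 + qs)) + (2 / (1 + qs)) • T (DihedralGroup.sr 0) ∧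
      φ (MonoidAlgebra.of ℝ (DihedralGroup 0) (DihedralGroup.sr 1)) =
        algebraMap ℝ A ((1 - qt) / (1 + qt)) + (2 / (1 + qt)) • T (DihedralGroup.sr 1) := by
  have hσs : sig qs (T (SR 0)) * sig qs (T (SR 0)) = 1 :=
    sig_sq hqs _ (Ts_sq T qs hone hmuls)
  have hσt : sig qt (T (SR 1)) * sig qt (T (SR 1)) = 1 :=
    sig_sq hqt _ (Tt_sq T qt hone hmult)
  set φ₀ : MonoidAlgebra ℝ W →ₐ[ℝ] A := phi0 _ _ hσs hσt with hφ₀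
  set ψ : A →ₗ[ℝ] MonoidAlgebra ℝ W := T.constr ℝ (E qs qt) with hψ
  have hES : φ₀ (tS qs) = T (SR 0) := by
    rw [hφ₀, tS, phi0_tS]; exact tgen_sig hqs _
  have hET : φ₀ (tT qt) = T (SR 1) := by
    rw [hφ₀, tT, phi0_tT]; exact tgen_sig hqt _
  have hφE : ∀ w : W, φ₀ (E qs qt w) = T w := by
    intro w
    cases w with
    | r n =>
      show φ₀ (E qs qt (R (zmodToInt n))) = T (R (zmodToInt n))
      set m := zmodToInt n with hm
      rcases le_or_gt 0 m with hmm | hmm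
      · rw [E_R_nonneg qs qt hmm, map_pow, map_mul, hES, hET,
          powST T qs qt hone hmuls hmult m.toNat, Int.toNat_of_nonneg hmm]
      · rw [E_R_nonpos qs qt hmm.le, map_pow, map_mul, hET, hES,
          powTS T qs qt hone hmuls hmult (-m).toNat,
          show -(((-m).toNat : ℕ) : ℤ) = m by omega]
    | sr n =>
      show φ₀ (E qs qt (SR (zmodToInt n))) = T (SR (zmodToInt n))
      set m := zmodToInt n with hm
      rcases le_or_gt m 0 with hmm | hmm
      · rw [E_SR, if_pos hmm, map_mul, hES, map_pow, map_mul, hET, hES,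
          powTS T qs qt hone hmuls hmult (-m).toNat,
          show -(((-m).toNat : ℕ) : ℤ) = m by omega,
          Ts_mul_R T qs hmuls m hmm]
      · rw [E_SR, if_neg (by omega), map_mul, hET, map_pow, map_mul, hES, hET,
          powST T qs qt hone hmuls hmult (m - 1).toNat,
          show (((m - 1).toNat : ℕ) : ℤ) = m - 1 by omega,
          Tt_mul_R T qt hmult (m - 1) (by omega), sub_add_cancel]
  have hφψ : ∀ a : A, φ₀ (ψ a) = a := by
    have heq : φ₀.toLinearMap.comp ψ = LinearMap.id := by
      apply T.ext
      intro w
      simp only [LinearMap.comp_apply, AlgHom.toLinearMap_apply, LinearMap.id_apply, hψ]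
      rw [T.constr_basis]
      exact hφE w
    intro a
    have := LinearMap.congr_fun heq a
    simpa using this
  have hsurjψ : ∀ x : MonoidAlgebra ℝ W, ∃ a : A, ψ a = x := by
    have hPle : P qs qt ≤ LinearMap.range ψ := by
      rw [P, Submodule.span_le]
      rintro _ ⟨w, rfl⟩
      exact ⟨T w, by rw [hψ]; exact T.constr_basis ℝ (E qs qt) w⟩
    intro x
    refine MonoidAlgebra.induction_on x (fun g => hPle (of_memP qs qt hqs hqt g))
      (fun f g hf hg => ?_) (fun r f hf => ?_)
    · obtain ⟨a, ha⟩ := hf; obtain ⟨b, hb⟩ := hg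
      exact ⟨a + b, by rw [map_add, ha, hb]⟩
    · obtain ⟨a, ha⟩ := hf
      exact ⟨r • a, by rw [map_smul, ha]⟩
  have hbij : Function.Bijective φ₀ := by
    constructor
    · intro x y hxy
      obtain ⟨a, rfl⟩ := hsurjψ x
      obtain ⟨b, rfl⟩ := hsurjψ y
      rw [hφψ a, hφψ b] at hxy
      rw [hxy]
    · intro a
      exact ⟨ψ a, hφψ a⟩
  refine ⟨AlgEquiv.ofBijective φ₀ hbij, ?_, ?_⟩
  · exact phi0_of_SR0 _ _ hσs hσt
  · exact phi0_of_SR1 _ _ hσs hσt
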